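/- Let L be a finite polygonal lattice. Then any two maximal chains C, C' of L are connected by a sequence of maximal chains C = C_0, C_1, ..., C_N = C' such that consecutive chains differ by a polygonal flip. -/

import Mathlib

variable {L : Type*} [Lattice L]

/-- `c` is a maximal chain of the subposet `s`. -/
def MaxChainIn (s c : Set L) : Prop :=
  c ⊆ s ∧ IsChain (· ≤ ·) c ∧
    ∀ c' : Set L, c ⊆ c' → c' ⊆ s → IsChain (· ≤ ·) c' → c' = c

/-- The interval `[a, b]` is a polygon: it has exactly two maximal chains, and these
agree only at the bottom and top elements. -/
def IsPolygon (a b : L) : Prop :=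
  a < b ∧ ∃ c₁ c₂ : Set L,
    MaxChainIn (Set.Icc a b) c₁ ∧ MaxChainIn (Set.Icc a b) c₂ ∧
    c₁ ≠ c₂ ∧ c₁ ∩ c₂ = {a, b} ∧
    ∀ c : Set L, MaxChainIn (Set.Icc a b) c → c = c₁ ∨ c = c₂

/-- A lattice is polygonal if joins of covers and meets of cocovers give polygons. -/
def IsPolygonal (L : Type*) [Lattice L] : Prop :=
  (∀ x y z : L, x ⋖ y → x ⋖ z → y ≠ z → IsPolygon x (y ⊔ z)) ∧
  (∀ x y z : L, y ⋖ x → z ⋖ x → y ≠ z → IsPolygon (y ⊓ z) x)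

/-- Maximal chains `C, C'` differ by a polygonal flip: there is a polygon `[a, b]`
such that `C` and `C'` agree below `a` and above `b`, and restrict to the two distinct
maximal chains of `[a, b]`. -/
def PolygonalFlip (C C' : Set L) : Prop :=
  ∃ a b : L, IsPolygon a b ∧
    C ∩ Set.Iic a = C' ∩ Set.Iic a ∧
    C ∩ Set.Ici b = C' ∩ Set.Ici b ∧
    MaxChainIn (Set.Icc a b) (C ∩ Set.Icc a b) ∧
    MaxChainIn (Set.Icc a b) (C' ∩ Set.Icc a b) ∧
    C ∩ Set.Icc a b ≠ C' ∩ Set.Icc a b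

open Set

lemma exists_maxChainIn (s c : Set L) (hcs : c ⊆ s) (hc : IsChain (· ≤ ·) c) :
    ∃ m, c ⊆ m ∧ MaxChainIn s m := by
  obtain ⟨m, hcm, hm⟩ := zorn_subset_nonempty {c' : Set L | c ⊆ c' ∧ c' ⊆ s ∧ IsChain (· ≤ ·) c'}
    (fun F hF hFchain hFne => by
      obtain ⟨t, ht⟩ := hFne
      refine ⟨⋃₀ F, ⟨(hF ht).1.trans (subset_sUnion_of_mem ht), ?_, ?_⟩,
        fun u hu => subset_sUnion_of_mem hu⟩
      · exact sUnion_subset fun u hu => (hF hu).2.1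
      · intro x hx y hy hxy
        obtain ⟨u, hu, hxu⟩ := hx
        obtain ⟨v, hv, hyv⟩ := hy
        rcases eq_or_ne u v with rfl | huv
        · exact (hF hu).2.2 hxu hyv hxy
        · rcases hFchain hu hv huv with h | h
          · exact (hF hv).2.2 (h hxu) hyv hxy
          · exact (hF hu).2.2 hxu (h hyv) hxy)
    c ⟨subset_rfl, hcs, hc⟩
  exact ⟨m, hcm, hm.prop.2.1, hm.prop.2.2, fun c' h1 h2 h3 =>
    subset_antisymm (hm.2 ⟨hm.prop.1.trans h1, h2, h3⟩ h1) h1⟩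

lemma mem_of_comp_all {C : Set L} (hC : IsMaxChain (· ≤ ·) C) {x : L}
    (h : ∀ e ∈ C, x ≤ e ∨ e ≤ x) : x ∈ C := by
  have h2 : IsChain (· ≤ ·) (insert x C) := hC.1.insert (fun b hb _ => h b hb)
  have := hC.2 h2 (subset_insert x C)
  rw [this]; exact mem_insert x C

lemma isMaxChain_of {E : Set L} (hch : IsChain (· ≤ ·) E)
    (h : ∀ x, (∀ e ∈ E, x ≤ e ∨ e ≤ x) → x ∈ E) : IsMaxChain (· ≤ ·) E := by
  refine ⟨hch, fun t ht hsub => subset_antisymm hsub fun x hx => h x fun e he => ?_⟩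
  rcases eq_or_ne x e with rfl | hne
  · exact Or.inl le_rfl
  · exact ht hx (hsub he) hne

lemma isMaxChain_of_maxChainIn_univ {E : Set L} (h : MaxChainIn Set.univ E) :
    IsMaxChain (· ≤ ·) E :=
  ⟨h.2.1, fun t ht hsub => (h.2.2 t hsub (subset_univ t) ht).symm⟩

lemma maxChainIn_Iic {C : Set L} (hC : IsMaxChain (· ≤ ·) C) {a : L} (ha : a ∈ C) :
    MaxChainIn (Iic a) (C ∩ Iic a) := by
  refine ⟨inter_subset_right, hC.1.mono inter_subset_left, fun c' h1 h2 h3 => ?_⟩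
  refine subset_antisymm (fun w hw => ⟨?_, h2 hw⟩) h1
  refine mem_of_comp_all hC fun e he => ?_
  by_cases hea : e ≤ a
  · have heC : e ∈ c' := h1 ⟨he, hea⟩
    rcases eq_or_ne w e with rfl | hne
    · exact Or.inl le_rfl
    · exact h3 hw heC hne
  · rcases eq_or_ne e a with rfl | hne
    · exact absurd le_rfl hea
    · rcases hC.1 he ha hne with h | h
      · exact absurd h hea
      · exact Or.inl ((h2 hw).trans h)

lemma succ_cover [Fintype L] {C : Set L} (hC : IsMaxChain (· ≤ ·) C) {a : L} (ha : a ∈ C)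
    (hne : (C ∩ Ioi a).Nonempty) :
    ∃ y ∈ C, a ⋖ y ∧ C ∩ Iic y = insert y (C ∩ Iic a) := by
  obtain ⟨y, hy, hymin⟩ : ∃ y ∈ C ∩ Ioi a, ∀ w ∈ C ∩ Ioi a, w ≤ y → y = w := by
    obtain ⟨y, hy, hm⟩ := (C ∩ Ioi a).toFinite.exists_minimal hne
    exact ⟨y, hy, fun w hw h => le_antisymm (hm hw h) h⟩
  have hleast : ∀ w ∈ C ∩ Ioi a, y ≤ w := by
    intro w hw
    rcases eq_or_ne y w with rfl | hne'
    · exact le_rfl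
    · rcases hC.1 hy.1 hw.1 hne' with h | h
      · exact h
      · exact (hymin w hw h).le
  have hcomp : ∀ w, a < w → w < y → w ∈ C := by
    intro w hw1 hw2
    refine mem_of_comp_all hC fun e he => ?_
    by_cases hea : e ≤ a
    · exact Or.inr (hea.trans hw1.le)
    · rcases eq_or_ne e a with rfl | hne'
      · exact Or.inr hw1.le
      · rcases hC.1 he ha hne' with h | h
        · exact absurd h hea
        · exact Or.inl (hw2.le.trans (hleast e ⟨he, lt_of_le_of_ne h (Ne.symm hne')⟩))
  have hcov : a ⋖ y := by
    refine ⟨hy.2, fun w hw1 hw2 => ?_⟩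
    exact absurd (hleast w ⟨hcomp w hw1 hw2, hw1⟩) (not_le_of_gt hw2)
  refine ⟨y, hy.1, hcov, ?_⟩
  ext e
  simp only [mem_inter_iff, mem_Iic, mem_insert_iff]
  constructor
  · rintro ⟨heC, hey⟩
    by_cases hea : e ≤ a
    · exact Or.inr ⟨heC, hea⟩
    · rcases eq_or_ne e a with rfl | hne'
      · exact absurd le_rfl hea
      · rcases hC.1 heC ha hne' with h | h
        · exact absurd h hea
        · exact Or.inl (le_antisymm hey (hleast e ⟨heC, lt_of_le_of_ne h (Ne.symm hne')⟩))
  · rintro (rfl | ⟨heC, hea⟩)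
    · exact ⟨hy.1, le_rfl⟩
    · exact ⟨heC, hea.trans hy.2.le⟩

def Conn (C C' : Set L) : Prop :=
  ∃ (N : ℕ) (f : ℕ → Set L), f 0 = C ∧ f N = C' ∧
    (∀ i ≤ N, IsMaxChain (· ≤ ·) (f i)) ∧
    (∀ i < N, PolygonalFlip (f i) (f (i + 1)))

lemma Conn.refl {C : Set L} (hC : IsMaxChain (· ≤ ·) C) : Conn C C :=
  ⟨0, fun _ => C, rfl, rfl, fun _ _ => hC, fun i h => absurd h (Nat.not_lt_zero i)⟩

lemma Conn.trans {A B D : Set L} (h1 : Conn A B) (h2 : Conn B D) : Conn A D := by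
  obtain ⟨N₁, f₁, h10, h11, h1m, h1f⟩ := h1
  obtain ⟨N₂, f₂, h20, h21, h2m, h2f⟩ := h2
  refine ⟨N₁ + N₂, fun i => if i ≤ N₁ then f₁ i else f₂ (i - N₁), by simp [h10], ?_, ?_, ?_⟩
  · by_cases h : N₁ + N₂ ≤ N₁
    · have hN : N₂ = 0 := by omega
      simp only [h, if_pos]
      subst hN
      rw [Nat.add_zero, h11, ← h20, h21]
    · simp [h, Nat.add_sub_cancel_left, h21]
  · intro i hi
    by_cases h : i ≤ N₁
    · simpa [h] using h1m i h
    · simp only [h, if_neg]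
      exact h2m (i - N₁) (by omega)
  · intro i hi
    by_cases h : i < N₁
    · have h' : i + 1 ≤ N₁ := h
      simpa [h.le, h'] using h1f i h
    · have hif : ¬ (i + 1 ≤ N₁) := by omega
      have he : i + 1 - N₁ = (i - N₁) + 1 := by omega
      by_cases h0 : i = N₁
      · subst h0
        simp only [le_refl, if_pos, hif, if_neg, h11, ← h20, he, Nat.sub_self]
        exact h2f 0 (by omega)
      · have h' : ¬ (i ≤ N₁) := by omega
        simp only [h', if_neg, hif, he]
        exact h2f (i - N₁) (by omega)

lemma Conn.single {A B : Set L} (hA : IsMaxChain (· ≤ ·) A) (hB : IsMaxChain (· ≤ ·) B)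
    (h : PolygonalFlip A B) : Conn A B := by
  refine ⟨1, fun i => if i = 0 then A else B, by simp, by simp, ?_, ?_⟩
  · intro i _
    by_cases h0 : i = 0 <;> simp [h0, hA, hB]
  · intro i hi
    have h0 : i = 0 := by omega
    subst h0
    simpa using h

lemma build_flip [Fintype L] {a t y z : L} (hP : IsPolygon a t)
    {p₁ p₂ : Set L} (hp₁ : MaxChainIn (Set.Icc a t) p₁) (hp₂ : MaxChainIn (Set.Icc a t) p₂)
    (hpne : p₁ ≠ p₂) (hpint : p₁ ∩ p₂ = {a, t})
    (hy : y ∈ p₁) (hz : z ∈ p₂) (hay : a ⋖ y) (haz : a ⋖ z) (hzt : z < t)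
    {C : Set L} (hC : IsMaxChain (· ≤ ·) C) (haC : a ∈ C) :
    ∃ E E' : Set L, IsMaxChain (· ≤ ·) E ∧ IsMaxChain (· ≤ ·) E' ∧ PolygonalFlip E E' ∧
      y ∈ E ∧ z ∈ E' ∧ E ∩ Set.Iic y = insert y (C ∩ Set.Iic a) ∧
      E' ∩ Set.Iic z = insert z (C ∩ Set.Iic a) := by
  have hat : a < t := hP.1
  have hap1 : a ∈ p₁ := by
    have : a ∈ p₁ ∩ p₂ := by rw [hpint]; exact Or.inl rfl
    exact this.1
  have hap2 : a ∈ p₂ := by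
    have : a ∈ p₁ ∩ p₂ := by rw [hpint]; exact Or.inl rfl
    exact this.2
  have htp1 : t ∈ p₁ := by
    have : t ∈ p₁ ∩ p₂ := by rw [hpint]; exact Or.inr rfl
    exact this.1
  have htp2 : t ∈ p₂ := by
    have : t ∈ p₁ ∩ p₂ := by rw [hpint]; exact Or.inr rfl
    exact this.2
  -- the starting chain
  have hc₀ : IsChain (· ≤ ·) ((C ∩ Set.Iic a) ∪ p₁) := by
    intro u hu v hv huv
    rcases hu with hu | hu <;> rcases hv with hv | hv
    · exact hC.1 hu.1 hv.1 huv
    · exact Or.inl (hu.2.trans (hp₁.1 hv).1)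
    · exact Or.inr (hv.2.trans (hp₁.1 hu).1)
    · exact hp₁.2.1 hu hv huv
  obtain ⟨E, hcE, hEmax⟩ := exists_maxChainIn Set.univ ((C ∩ Set.Iic a) ∪ p₁)
    (Set.subset_univ _) hc₀
  have hE : IsMaxChain (· ≤ ·) E := isMaxChain_of_maxChainIn_univ hEmax
  have hCIaE : C ∩ Set.Iic a ⊆ E := (Set.subset_union_left).trans hcE
  have hp₁E : p₁ ⊆ E := (Set.subset_union_right).trans hcE
  have haE : a ∈ E := hp₁E hap1
  have htE : t ∈ E := hp₁E htp1
  -- E agrees with C below a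
  have hEa : E ∩ Set.Iic a = C ∩ Set.Iic a := by
    refine (maxChainIn_Iic hC haC).2.2 _ ?_ Set.inter_subset_right
      (hE.1.mono Set.inter_subset_left)
    exact Set.subset_inter hCIaE Set.inter_subset_right
  -- E restricted to the polygon is p₁
  have hEt : E ∩ Set.Icc a t = p₁ := by
    refine Set.Subset.antisymm (fun e he => ?_)
      (Set.subset_inter hp₁E hp₁.1)
    have hch : IsChain (· ≤ ·) (insert e p₁) := by
      refine hp₁.2.1.insert fun b hb hne => ?_
      exact hE.1 he.1 (hp₁E hb) hne
    have := hp₁.2.2 (insert e p₁) (Set.subset_insert e p₁)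
      (Set.insert_subset he.2 hp₁.1) hch
    rw [← this]; exact Set.mem_insert e p₁
  -- the flipped chain
  set E' : Set L := (E ∩ Set.Iic a) ∪ p₂ ∪ (E ∩ Set.Ici t) with hE'def
  have haE' : a ∈ E' := Or.inl (Or.inr hap2)
  have htE' : t ∈ E' := Or.inl (Or.inr htp2)
  have hE'chain : IsChain (· ≤ ·) E' := by
    intro u hu v hv huv
    rcases hu with (hu | hu) | hu <;> rcases hv with (hv | hv) | hv
    · exact hE.1 hu.1 hv.1 huv
    · exact Or.inl (hu.2.trans (hp₂.1 hv).1)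
    · exact Or.inl (hu.2.trans (hat.le.trans hv.2))
    · exact Or.inr (hv.2.trans (hp₂.1 hu).1)
    · exact hp₂.2.1 hu hv huv
    · exact Or.inl ((hp₂.1 hu).2.trans hv.2)
    · exact Or.inr (hv.2.trans (hat.le.trans hu.2))
    · exact Or.inr ((hp₂.1 hv).2.trans hu.2)
    · exact hE.1 hu.1 hv.1 huv
  have hE' : IsMaxChain (· ≤ ·) E' := by
    refine isMaxChain_of hE'chain fun x hx => ?_
    by_cases hxa : x ≤ a
    · -- x is comparable with everything in E
      have hxE : x ∈ E := by
        refine mem_of_comp_all hE fun e he => ?_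
        by_cases hea : e ≤ a
        · rcases eq_or_ne x e with rfl | hne
          · exact Or.inl le_rfl
          · exact hx e (Or.inl (Or.inl ⟨he, hea⟩)) |>.imp id id
        · rcases eq_or_ne e a with rfl | hne
          · exact absurd le_rfl hea
          · rcases hE.1 he haE hne with h | h
            · exact absurd h hea
            · exact Or.inl (hxa.trans h)
      exact Or.inl (Or.inl ⟨hxE, hxa⟩)
    · by_cases hxt : t ≤ x
      · have hxE : x ∈ E := by
          refine mem_of_comp_all hE fun e he => ?_
          by_cases het : t ≤ e
          · rcases eq_or_ne x e with rfl | hne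
            · exact Or.inl le_rfl
            · exact hx e (Or.inr ⟨he, het⟩) |>.imp id id
          · rcases eq_or_ne e t with rfl | hne
            · exact absurd le_rfl het
            · rcases hE.1 he htE hne with h | h
              · exact Or.inr (h.trans hxt)
              · exact absurd h het
        exact Or.inr ⟨hxE, hxt⟩
      · -- x lies in the interval, so x ∈ p₂
        have hax : a ≤ x := by
          rcases hx a haE' with h | h
          · exact absurd h hxa
          · exact h
        have hxt' : x ≤ t := by
          rcases hx t htE' with h | h
          · exact h
          · exact absurd h hxt
        have hch : IsChain (· ≤ ·) (insert x p₂) := by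
          refine hp₂.2.1.insert fun b hb hne => hx b (Or.inl (Or.inr hb))
        have := hp₂.2.2 (insert x p₂) (Set.subset_insert x p₂)
          (Set.insert_subset ⟨hax, hxt'⟩ hp₂.1) hch
        have hxp : x ∈ p₂ := by rw [← this]; exact Set.mem_insert x p₂
        exact Or.inl (Or.inr hxp)
  -- set computations
  have hE'a : E' ∩ Set.Iic a = E ∩ Set.Iic a := by
    ext e
    simp only [hE'def, Set.mem_inter_iff, Set.mem_union, Set.mem_Iic, Set.mem_Ici]
    constructor
    · rintro ⟨(⟨he, _⟩ | he) | ⟨he, het⟩, hea⟩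
      · exact ⟨he, hea⟩
      · have : e = a := le_antisymm hea (hp₂.1 he).1
        subst this; exact ⟨haE, le_rfl⟩
      · exact absurd (het.trans hea) (not_le_of_gt hat)
    · rintro ⟨he, hea⟩
      exact ⟨Or.inl (Or.inl ⟨he, hea⟩), hea⟩
  have hE't : E' ∩ Set.Ici t = E ∩ Set.Ici t := by
    ext e
    simp only [hE'def, Set.mem_inter_iff, Set.mem_union, Set.mem_Iic, Set.mem_Ici]
    constructor
    · rintro ⟨(⟨he, hea⟩ | he) | ⟨he, het⟩, hte⟩
      · exact absurd (hte.trans hea) (not_le_of_gt hat)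
      · have : e = t := le_antisymm (hp₂.1 he).2 hte
        subst this; exact ⟨htE, le_rfl⟩
      · exact ⟨he, hte⟩
    · rintro ⟨he, hte⟩
      exact ⟨Or.inr ⟨he, hte⟩, hte⟩
  have hE'p : E' ∩ Set.Icc a t = p₂ := by
    ext e
    simp only [hE'def, Set.mem_inter_iff, Set.mem_union, Set.mem_Iic, Set.mem_Ici, Set.mem_Icc]
    constructor
    · rintro ⟨(⟨_, hea⟩ | he) | ⟨_, het⟩, hae, het'⟩
      · have : e = a := le_antisymm hea hae
        subst this; exact hap2
      · exact he
      · have : e = t := le_antisymm het' het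
        subst this; exact htp2
    · intro he
      exact ⟨Or.inl (Or.inr he), (hp₂.1 he).1, (hp₂.1 he).2⟩
  -- the flip
  have hflip : PolygonalFlip E E' := by
    refine ⟨a, t, hP, hE'a.symm, hE't.symm, ?_, ?_, ?_⟩
    · rw [hEt]; exact hp₁
    · rw [hE'p]; exact hp₂
    · rw [hEt, hE'p]; exact hpne
  -- remaining properties
  refine ⟨E, E', hE, hE', hflip, hp₁E hy, Or.inl (Or.inr hz), ?_, ?_⟩
  · -- E ∩ Iic y
    ext e
    simp only [Set.mem_inter_iff, Set.mem_Iic, Set.mem_insert_iff]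
    constructor
    · rintro ⟨he, hey⟩
      by_cases hea : e ≤ a
      · have hmem : e ∈ C ∩ Set.Iic a := hEa ▸ (Set.mem_inter he hea)
        exact Or.inr ⟨hmem.1, hmem.2⟩
      · have hae : a ≤ e := by
          rcases eq_or_ne e a with rfl | hne
          · exact le_rfl
          · rcases hE.1 he haE hne with h | h
            · exact absurd h hea
            · exact h
        have hep₁ : e ∈ p₁ := by
          rw [← hEt]
          exact ⟨he, hae, hey.trans ((hp₁.1 hy).2)⟩
        rcases hay.eq_or_eq hae hey with h | h
        · exact absurd h.le hea
        · exact Or.inl h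
    · rintro (rfl | ⟨heC, hea⟩)
      · exact ⟨hp₁E hy, le_rfl⟩
      · exact ⟨hCIaE ⟨heC, hea⟩, hea.trans hay.lt.le⟩
  · -- E' ∩ Iic z
    ext e
    simp only [hE'def, Set.mem_inter_iff, Set.mem_union, Set.mem_Iic, Set.mem_Ici,
      Set.mem_insert_iff]
    constructor
    · rintro ⟨(⟨he, hea⟩ | he) | ⟨he, het⟩, hez⟩
      · have hmem : e ∈ C ∩ Set.Iic a := hEa ▸ (Set.mem_inter he hea)
        exact Or.inr ⟨hmem.1, hmem.2⟩
      · have hae : a ≤ e := (hp₂.1 he).1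
        rcases haz.eq_or_eq hae hez with h | h
        · subst h; exact Or.inr ⟨haC, le_rfl⟩
        · exact Or.inl h
      · exact absurd (het.trans hez) (not_le_of_gt hzt)
    · rintro (rfl | ⟨heC, hea⟩)
      · exact ⟨Or.inl (Or.inr hz), le_rfl⟩
      · exact ⟨Or.inl (Or.inl ⟨hCIaE ⟨heC, hea⟩, hea⟩), hea.trans haz.lt.le⟩

lemma key [Fintype L] (hL : IsPolygonal L) :
    ∀ (n : ℕ) (a : L) (C C' : Set L), (Set.Ioi a).ncard = n →
      IsMaxChain (· ≤ ·) C → IsMaxChain (· ≤ ·) C' → a ∈ C → a ∈ C' →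
      C ∩ Set.Iic a = C' ∩ Set.Iic a → Conn C C' := by
  intro n
  induction n using Nat.strong_induction_on with
  | _ n IH =>
  intro a C C' hcard hC hC' haC haC' hagree
  by_cases hCC : C = C'
  · subst hCC; exact Conn.refl hC
  have hbelow : ∀ (A B : Set L), IsMaxChain (· ≤ ·) A → IsMaxChain (· ≤ ·) B → a ∈ A →
      A ∩ Set.Iic a = B ∩ Set.Iic a → ¬ (A ∩ Set.Ioi a).Nonempty → A = B := by
    intro A B hA hB haA hab hne
    have hsub : A ⊆ B := by
      intro e he
      have hea : e ≤ a := by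
        by_contra h
        rcases eq_or_ne e a with rfl | hne'
        · exact h le_rfl
        · rcases hA.1 he haA hne' with h' | h'
          · exact h h'
          · exact hne ⟨e, he, lt_of_le_of_ne h' (Ne.symm hne')⟩
      have : e ∈ B ∩ Set.Iic a := hab ▸ (Set.mem_inter he hea)
      exact this.1
    exact hA.2 hB.1 hsub
  have hne : (C ∩ Set.Ioi a).Nonempty := by
    by_contra h
    exact hCC (hbelow C C' hC hC' haC hagree h)
  have hne' : (C' ∩ Set.Ioi a).Nonempty := by
    by_contra h
    exact hCC (hbelow C' C hC' hC haC' hagree.symm h).symm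
  obtain ⟨y, hyC, hay, hCy⟩ := succ_cover hC haC hne
  obtain ⟨z, hzC', haz, hC'z⟩ := succ_cover hC' haC' hne'
  have hlt : ∀ w, a ⋖ w → (Set.Ioi w).ncard < n := by
    intro w hw
    rw [← hcard]
    refine Set.ncard_lt_ncard ?_ (Set.toFinite _)
    have hsub : Set.Ioi w ⊆ Set.Ioi a := fun x hx => hw.lt.trans hx
    rw [Set.ssubset_iff_of_subset hsub]
    exact ⟨w, hw.lt, lt_irrefl w⟩
  by_cases hyz : y = z
  · subst hyz
    exact IH _ (hlt y hay) y C C' rfl hC hC' hyC hzC'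
      (by rw [hCy, hC'z, hagree])
  · obtain ⟨hat, p₁, p₂, hp₁, hp₂, hpne, hpint, hpall⟩ := hL.1 a y z hay haz hyz
    have hylt : y < y ⊔ z := by
      rcases lt_or_eq_of_le (le_sup_left : y ≤ y ⊔ z) with h | h
      · exact h
      · exfalso
        have hzy : z ≤ y := h ▸ le_sup_right
        rcases lt_or_eq_of_le hzy with h' | h'
        · exact hay.2 haz.lt h'
        · exact hyz h'.symm
    have hzlt : z < y ⊔ z := by
      rcases lt_or_eq_of_le (le_sup_right : z ≤ y ⊔ z) with h | h
      · exact h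
      · exfalso
        have hyz' : y ≤ z := h ▸ le_sup_left
        rcases lt_or_eq_of_le hyz' with h' | h'
        · exact haz.2 hay.lt h'
        · exact hyz h'
    -- determine which chain contains y and which contains z
    obtain ⟨qy, hyqy, hqy⟩ := exists_maxChainIn (Set.Icc a (y ⊔ z)) {y}
      (Set.singleton_subset_iff.2 ⟨hay.lt.le, le_sup_left⟩) Set.subsingleton_singleton.isChain
    obtain ⟨qz, hzqz, hqz⟩ := exists_maxChainIn (Set.Icc a (y ⊔ z)) {z}
      (Set.singleton_subset_iff.2 ⟨haz.lt.le, le_sup_right⟩) Set.subsingleton_singleton.isChain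
    have hymem : y ∈ qy := hyqy rfl
    have hzmem : z ∈ qz := hzqz rfl
    have hincomp : ∀ p : Set L, IsChain (· ≤ ·) p → y ∈ p → z ∈ p → False := by
      intro p hp hyp hzp
      rcases hp hyp hzp hyz with h | h
      · exact haz.2 hay.lt (lt_of_le_of_ne h hyz)
      · exact hay.2 haz.lt (lt_of_le_of_ne h (Ne.symm hyz))
    have hmain : ∀ P₁ P₂ : Set L, MaxChainIn (Set.Icc a (y ⊔ z)) P₁ →
        MaxChainIn (Set.Icc a (y ⊔ z)) P₂ → P₁ ≠ P₂ → P₁ ∩ P₂ = {a, y ⊔ z} →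
        y ∈ P₁ → z ∈ P₂ → Conn C C' := by
      intro P₁ P₂ hP₁ hP₂ hPne hPint hyP hzP
      obtain ⟨E, E', hE, hE', hflip, hyE, hzE', hEy, hE'z⟩ :=
        build_flip (hL.1 a y z hay haz hyz) hP₁ hP₂ hPne hPint hyP hzP hay haz hzlt hC haC
      have c1 : Conn C E :=
        IH _ (hlt y hay) y C E rfl hC hE hyC hyE (by rw [hCy, hEy])
      have c2 : Conn E E' := Conn.single hE hE' hflip
      have c3 : Conn E' C' :=
        IH _ (hlt z haz) z E' C' rfl hE' hC' hzE' hzC' (by rw [hE'z, hC'z, hagree])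
      exact (c1.trans c2).trans c3
    rcases hpall qy hqy with h1 | h1 <;> rcases hpall qz hqz with h2 | h2
    · exact (hincomp p₁ hp₁.2.1 (h1 ▸ hymem) (h2 ▸ hzmem)).elim
    · exact hmain p₁ p₂ hp₁ hp₂ hpne hpint (h1 ▸ hymem) (h2 ▸ hzmem)
    · exact hmain p₂ p₁ hp₂ hp₁ hpne.symm (by rw [Set.inter_comm]; exact hpint)
        (h1 ▸ hymem) (h2 ▸ hzmem)
    · exact (hincomp p₂ hp₂.2.1 (h1 ▸ hymem) (h2 ▸ hzmem)).elim

/-- In a finite polygonal lattice, any two maximal chains are connected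
by a sequence of maximal chains in which consecutive chains differ by a polygonal
flip. -/
theorem stmt14 {L : Type*} [Lattice L] [Fintype L] (hL : IsPolygonal L)
    (C C' : Set L) (hC : IsMaxChain (· ≤ ·) C) (hC' : IsMaxChain (· ≤ ·) C') :
    ∃ (N : ℕ) (f : ℕ → Set L), f 0 = C ∧ f N = C' ∧
      (∀ i ≤ N, IsMaxChain (· ≤ ·) (f i)) ∧
      (∀ i < N, PolygonalFlip (f i) (f (i + 1))) := by
  cases isEmpty_or_nonempty L with
  | inl h =>
    refine ⟨0, fun _ => C, rfl, ?_, fun _ _ => hC, fun i h => absurd h (Nat.not_lt_zero i)⟩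
    rw [Set.eq_empty_of_isEmpty C, Set.eq_empty_of_isEmpty C']
  | inr h =>
    have hble : ∀ x : L, (Finset.univ : Finset L).inf' Finset.univ_nonempty id ≤ x :=
      fun x => Finset.inf'_le id (Finset.mem_univ x)
    set b := (Finset.univ : Finset L).inf' Finset.univ_nonempty id with hbdef
    have hbC : b ∈ C := mem_of_comp_all hC fun e _ => Or.inl (hble e)
    have hbC' : b ∈ C' := mem_of_comp_all hC' fun e _ => Or.inl (hble e)
    have hag : C ∩ Set.Iic b = C' ∩ Set.Iic b := by
      ext e
      simp only [Set.mem_inter_iff, Set.mem_Iic]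
      constructor
      · rintro ⟨_, hle⟩
        have he : e = b := le_antisymm hle (hble e)
        subst he
        exact ⟨hbC', le_rfl⟩
      · rintro ⟨_, hle⟩
        have he : e = b := le_antisymm hle (hble e)
        subst he
        exact ⟨hbC, le_rfl⟩
    exact key hL _ b C C' rfl hC hC' hbC hbC' hag
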